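/- Let U, V ⊆ ℂ be open sets and let φ : V → U be holomorphic with nowhere-vanishing derivative. Let (Q_n)_{n≥0} be holomorphic functions on U, and define transformed potentials (Q̃_n)_{n≥0} on V by Q̃_n(z̃) = Q_n(φ(z̃))·φ'(z̃)² for all n ≠ 2, and Q̃₂(z̃) = Q₂(φ(z̃))·φ'(z̃)² − (1/2)·{φ}(z̃), where {φ} is the Schwarzian derivative of φ. Let s : U → ℂ be a nowhere-vanishing holomorphic square root of Q₀, and set s̃(z̃) = s(φ(z̃))·φ'(z̃), which is a nowhere-vanishing holomorphic square root of Q̃₀ on V. Let (S_n⁺) and (S_n⁻) be the WKB families for (Q_n) on U with leading terms s and −s respectively, and let (S̃_n⁺) and (S̃_n⁻) be the WKB families for (Q̃_n) on V with leading terms s̃ and −s̃ respectively. Then for every n ≥ −1 and every z̃ ∈ V: S̃_n⁺(z̃) − S̃_n⁻(z̃) = (S_n⁺(φ(z̃)) − S_n⁻(φ(z̃)))·φ'(z̃). Equivalently, the odd part satisfies S̃_{odd,n}(z̃) = S_{odd,n}(φ(z̃))·φ'(z̃) for all n, i.e. S_odd(z,ħ)dz transforms as a 1-form. -/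

import Mathlib

/-- The Schwarzian derivative of a holomorphic function `f`:
`{f}(z) = (f''/f')'(z) − (1/2)·(f''(z)/f'(z))²`. -/
noncomputable def schwarzian (f : ℂ → ℂ) (z : ℂ) : ℂ :=
  deriv (fun w => deriv (deriv f) w / deriv f w) z
    - (1 / 2) * (deriv (deriv f) z / deriv f z) ^ 2

/-- A WKB family for the potentials `(Q_n)_{n≥0}` with leading term `s` on `U`.
Here `S k` represents the coefficient `S_{k−1}` of the paper (indices shifted by one,
so that `S 0 = S_{−1} = s`). -/
def WKBFamily (U : Set ℂ) (Q : ℕ → ℂ → ℂ) (s : ℂ → ℂ) (S : ℕ → ℂ → ℂ) : Prop :=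
  (∀ k, DifferentiableOn ℂ (S k) U) ∧ Set.EqOn (S 0) s U ∧
    ∀ k : ℕ, ∀ z ∈ U,
      2 * S 0 z * S (k + 1) z
          + (∑ a ∈ Finset.range k, S (a + 1) z * S (k - a) z)
          + deriv (S k) z
        = Q (k + 1) z

noncomputable def Tmap (φ : ℂ → ℂ) (S : ℕ → ℂ → ℂ) (k : ℕ) (z : ℂ) : ℂ :=
  S k (φ z) * deriv φ z -
    (if k = 1 then (1 / 2) * (deriv (deriv φ) z / deriv φ z) else 0)

lemma tmap_deriv (U V : Set ℂ) (hU : IsOpen U) (hV : IsOpen V)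
    (φ : ℂ → ℂ) (hφ : DifferentiableOn ℂ φ V) (hmaps : Set.MapsTo φ V U)
    (hφ' : ∀ z ∈ V, deriv φ z ≠ 0)
    (S : ℕ → ℂ → ℂ) (hSd : ∀ k, DifferentiableOn ℂ (S k) U)
    (k : ℕ) (z : ℂ) (hz : z ∈ V) :
    deriv (Tmap φ S k) z
      = deriv (S k) (φ z) * (deriv φ z) ^ 2 + S k (φ z) * deriv (deriv φ) z
        - (if k = 1 then
            (1 / 2) * deriv (fun w => deriv (deriv φ) w / deriv φ w) z else 0) := by
  have hzn : V ∈ nhds z := hV.mem_nhds hz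
  have hun : U ∈ nhds (φ z) := hU.mem_nhds (hmaps hz)
  have A : AnalyticOnNhd ℂ φ V := hφ.analyticOnNhd hV
  have hp : HasDerivAt φ (deriv φ z) z := (hφ.differentiableAt hzn).hasDerivAt
  have hq : HasDerivAt (deriv φ) (deriv (deriv φ) z) z :=
    ((A.deriv z hz).differentiableAt).hasDerivAt
  have hSk : HasDerivAt (S k) (deriv (S k) (φ z)) (φ z) :=
    ((hSd k).differentiableAt hun).hasDerivAt
  have hcomp : HasDerivAt (fun w => S k (φ w)) (deriv (S k) (φ z) * deriv φ z) z :=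
    HasDerivAt.comp z hSk hp
  have hmul : HasDerivAt (fun w => S k (φ w) * deriv φ w)
      (deriv (S k) (φ z) * deriv φ z * deriv φ z + S k (φ z) * deriv (deriv φ) z) z :=
    hcomp.mul hq
  by_cases hk : k = 1
  · subst hk
    have hr : DifferentiableAt ℂ (fun w => deriv (deriv φ) w / deriv φ w) z :=
      DifferentiableAt.div ((A.deriv.deriv z hz).differentiableAt)
        ((A.deriv z hz).differentiableAt) (hφ' z hz)
    have hc : HasDerivAt (fun w => (1 / 2 : ℂ) * (deriv (deriv φ) w / deriv φ w))
        ((1 / 2) * deriv (fun w => deriv (deriv φ) w / deriv φ w) z) z :=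
      (hr.hasDerivAt).const_mul (1 / 2)
    have : Tmap φ S 1 = fun w =>
        S 1 (φ w) * deriv φ w - (1 / 2) * (deriv (deriv φ) w / deriv φ w) := by
      funext w; simp [Tmap]
    have hd : deriv (fun w => S 1 (φ w) * deriv φ w
        - (1 / 2 : ℂ) * (deriv (deriv φ) w / deriv φ w)) z = _ := (hmul.sub hc).deriv
    rw [this, hd]
    simp; ring
  · have : Tmap φ S k = fun w => S k (φ w) * deriv φ w := by
      funext w; simp [Tmap, hk]
    rw [this, hmul.deriv]
    simp [hk]; ring

lemma tmap_rec (U V : Set ℂ) (hU : IsOpen U) (hV : IsOpen V)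
    (φ : ℂ → ℂ) (hφ : DifferentiableOn ℂ φ V) (hmaps : Set.MapsTo φ V U)
    (hφ' : ∀ z ∈ V, deriv φ z ≠ 0)
    (Q Qt : ℕ → ℂ → ℂ)
    (hQt : ∀ n, n ≠ 2 → ∀ z ∈ V, Qt n z = Q n (φ z) * (deriv φ z) ^ 2)
    (hQt2 : ∀ z ∈ V, Qt 2 z = Q 2 (φ z) * (deriv φ z) ^ 2 - (1 / 2) * schwarzian φ z)
    (s : ℂ → ℂ) (S : ℕ → ℂ → ℂ) (hS : WKBFamily U Q s S) :
    ∀ k : ℕ, ∀ z ∈ V,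
      2 * Tmap φ S 0 z * Tmap φ S (k + 1) z
        + (∑ a ∈ Finset.range k, Tmap φ S (a + 1) z * Tmap φ S (k - a) z)
        + deriv (Tmap φ S k) z = Qt (k + 1) z := by
  intro k z hz
  have hu : φ z ∈ U := hmaps hz
  have hp0 : deriv φ z ≠ 0 := hφ' z hz
  have hpinv : deriv φ z * (deriv φ z)⁻¹ = 1 := mul_inv_cancel₀ hp0
  have hrec := hS.2.2 k (φ z) hu
  have hder := tmap_deriv U V hU hV φ hφ hmaps hφ' S hS.1 k z hz
  match k with
  | 0 =>
    rw [hQt 1 (by norm_num) z hz]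
    norm_num at hrec
    simp only [Finset.range_zero, Finset.sum_empty]
    rw [hder]
    simp only [Tmap]
    norm_num
    linear_combination (deriv φ z)^2 * hrec - S 0 (φ z) * deriv (deriv φ) z * hpinv
  | 1 =>
    rw [hQt2 z hz]
    norm_num at hrec
    rw [Finset.sum_range_one, hder]
    simp only [Tmap, schwarzian]
    norm_num
    linear_combination (deriv φ z)^2 * hrec - S 1 (φ z) * deriv (deriv φ) z * hpinv
  | (m+2) =>
    rw [hQt (m+2+1) (by omega) z hz]
    rw [hder]
    rw [show m+2 = m+1+1 from rfl] at hrec ⊢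
    rw [Finset.sum_range_succ', Finset.sum_range_succ] at hrec ⊢
    simp only [Nat.sub_zero, Nat.zero_add] at hrec ⊢
    have e1 : m + 1 + 1 - (m + 1) = 1 := by omega
    rw [e1] at hrec ⊢
    have hmid : ∀ a ∈ Finset.range m,
        Tmap φ S (a + 1 + 1) z * Tmap φ S (m + 1 + 1 - (a + 1)) z
          = (S (a + 1 + 1) (φ z) * S (m + 1 + 1 - (a + 1)) (φ z)) * (deriv φ z)^2 := by
      intro a ha
      have ha' := Finset.mem_range.mp ha
      rw [Tmap, Tmap, if_neg (by omega), if_neg (show ¬ m + 1 + 1 - (a+1) = 1 by omega)]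
      ring
    rw [Finset.sum_congr rfl hmid, ← Finset.sum_mul]
    simp only [Tmap]
    norm_num
    linear_combination (deriv φ z)^2 * hrec
      - S (m+2) (φ z) * deriv (deriv φ) z * hpinv

lemma wkb_unique (V : Set ℂ) (hV : IsOpen V) (Qt : ℕ → ℂ → ℂ) (st : ℂ → ℂ)
    (hst0 : ∀ z ∈ V, st z ≠ 0)
    (S T : ℕ → ℂ → ℂ)
    (hS0 : Set.EqOn (S 0) st V)
    (hSrec : ∀ k : ℕ, ∀ z ∈ V, 2 * S 0 z * S (k + 1) z
      + (∑ a ∈ Finset.range k, S (a + 1) z * S (k - a) z) + deriv (S k) z = Qt (k + 1) z)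
    (hT0 : Set.EqOn (T 0) st V)
    (hTrec : ∀ k : ℕ, ∀ z ∈ V, 2 * T 0 z * T (k + 1) z
      + (∑ a ∈ Finset.range k, T (a + 1) z * T (k - a) z) + deriv (T k) z = Qt (k + 1) z) :
    ∀ k, Set.EqOn (S k) (T k) V := by
  intro k
  induction k using Nat.strong_induction_on with
  | _ k ih =>
    match k with
    | 0 => exact fun z hz => (hS0 hz).trans (hT0 hz).symm
    | (n+1) =>
      intro z hz
      have eq1 := hSrec n z hz
      have eq2 := hTrec n z hz
      have hsum : (∑ a ∈ Finset.range n, S (a + 1) z * S (n - a) z)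
          = ∑ a ∈ Finset.range n, T (a + 1) z * T (n - a) z := by
        refine Finset.sum_congr rfl fun a ha => ?_
        have ha' := Finset.mem_range.mp ha
        rw [ih (a+1) (by omega) hz, ih (n-a) (by omega) hz]
      have hder : deriv (S n) z = deriv (T n) z := by
        exact Filter.EventuallyEq.deriv_eq
          (Filter.eventuallyEq_of_mem (hV.mem_nhds hz) (fun x hx => ih n (by omega) hx))
      have hS0z : S 0 z = st z := hS0 hz
      have hT0z : T 0 z = st z := hT0 hz
      have key : (2 * st z) * S (n+1) z = (2 * st z) * T (n+1) z := by
        linear_combination eq1 - eq2 - hsum - hder - 2 * S (n+1) z * hS0z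
          + 2 * T (n+1) z * hT0z
      exact mul_left_cancel₀ (mul_ne_zero two_ne_zero (hst0 z hz)) key

/-- The odd part `S_odd(z,ħ)dz` transforms as a 1-form under a holomorphic change of
coordinate `z = φ(z̃)`: with the transformed potentials `Q̃_n = (Q_n ∘ φ)·(φ')²` for
`n ≠ 2` and `Q̃₂ = (Q₂ ∘ φ)·(φ')² − (1/2){φ}`, and `s̃ = (s ∘ φ)·φ'`, the WKB families
satisfy `S̃_n⁺ − S̃_n⁻ = ((S_n⁺ − S_n⁻) ∘ φ)·φ'` for all `n ≥ −1` (shifted index `k`). -/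
theorem wkb_odd_part_transforms_as_one_form
    (U V : Set ℂ) (hU : IsOpen U) (hV : IsOpen V)
    (φ : ℂ → ℂ) (hφ : DifferentiableOn ℂ φ V) (hmaps : Set.MapsTo φ V U)
    (hφ' : ∀ z ∈ V, deriv φ z ≠ 0)
    (Q : ℕ → ℂ → ℂ) (hQ : ∀ n, DifferentiableOn ℂ (Q n) U)
    (Qt : ℕ → ℂ → ℂ)
    (hQt : ∀ n, n ≠ 2 → ∀ z ∈ V, Qt n z = Q n (φ z) * (deriv φ z) ^ 2)
    (hQt2 : ∀ z ∈ V, Qt 2 z = Q 2 (φ z) * (deriv φ z) ^ 2 - (1 / 2) * schwarzian φ z)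
    (s : ℂ → ℂ) (hs : DifferentiableOn ℂ s U)
    (hs0 : ∀ z ∈ U, s z ≠ 0) (hs2 : ∀ z ∈ U, s z ^ 2 = Q 0 z)
    (st : ℂ → ℂ) (hst : ∀ z ∈ V, st z = s (φ z) * deriv φ z)
    (Sp Sm : ℕ → ℂ → ℂ)
    (hSp : WKBFamily U Q s Sp) (hSm : WKBFamily U Q (fun z => -(s z)) Sm)
    (Stp Stm : ℕ → ℂ → ℂ)
    (hStp : WKBFamily V Qt st Stp) (hStm : WKBFamily V Qt (fun z => -(st z)) Stm) :
    (∀ z ∈ V, st z ≠ 0 ∧ st z ^ 2 = Qt 0 z) ∧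
    (∀ k : ℕ, ∀ z ∈ V,
      Stp k z - Stm k z = (Sp k (φ z) - Sm k (φ z)) * deriv φ z) := by
  have hst0 : ∀ z ∈ V, st z ≠ 0 := fun z hz => by
    rw [hst z hz]; exact mul_ne_zero (hs0 _ (hmaps hz)) (hφ' z hz)
  constructor
  · intro z hz
    refine ⟨hst0 z hz, ?_⟩
    rw [hst z hz, hQt 0 (by norm_num) z hz, mul_pow, hs2 _ (hmaps hz)]
  · have hTp := tmap_rec U V hU hV φ hφ hmaps hφ' Q Qt hQt hQt2 s Sp hSp
    have hTm := tmap_rec U V hU hV φ hφ hmaps hφ' Q Qt hQt hQt2 _ Sm hSm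
    have hTp0 : Set.EqOn (Tmap φ Sp 0) st V := by
      intro z hz
      simp only [Tmap, if_neg (by norm_num : ¬ (0:ℕ) = 1), sub_zero]
      rw [hSp.2.1 (hmaps hz)]
      exact (hst z hz).symm
    have hTm0 : Set.EqOn (Tmap φ Sm 0) (fun z => -(st z)) V := by
      intro z hz
      simp only [Tmap, if_neg (by norm_num : ¬ (0:ℕ) = 1), sub_zero]
      rw [hSm.2.1 (hmaps hz), hst z hz]
      ring
    have hp := wkb_unique V hV Qt st hst0 Stp (Tmap φ Sp) hStp.2.1 hStp.2.2 hTp0 hTp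
    have hm := wkb_unique V hV Qt (fun z => -(st z))
      (fun z hz => neg_ne_zero.mpr (hst0 z hz)) Stm (Tmap φ Sm)
      hStm.2.1 hStm.2.2 hTm0 hTm
    intro k z hz
    rw [hp k hz, hm k hz]
    simp only [Tmap]
    ring
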